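/- For every finite simple graph H there exist a natural number m, pairwise non-isomorphic connected finite simple graphs H₁, …, Hₘ, and a polynomial p ∈ ℚ[x₁, …, xₘ] such that for every finite simple graph G one has i(H, G) = p(i(H₁, G), …, i(Hₘ, G)). In other words, the graph parameter G ↦ i(H,G) lies in the subalgebra of functions on graphs generated by the induced-subgraph counts of connected graphs. -/

import Mathlib

open Finset

/-- `graphCount H G` is the number of vertex subsets `S ⊆ V(G)` such that the induced
subgraph `G[S]` is isomorphic to `H`. -/
noncomputable def graphCount {α β : Type*} [Fintype β]
    (H : SimpleGraph α) (G : SimpleGraph β) : ℕ :=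
  Nat.card {S : Finset β // Nonempty (G.induce (S : Set β) ≃g H)}

namespace IndCount
open SimpleGraph
open scoped Classical

noncomputable section

variable {α β γ δ : Type*}

lemma graphCount_congr_left [Fintype β] {H : SimpleGraph α} {H' : SimpleGraph γ}
    (e : H ≃g H') (G : SimpleGraph β) : graphCount H G = graphCount H' G :=
  Nat.card_congr <| Equiv.subtypeEquivRight fun _ =>
    ⟨fun ⟨f⟩ => ⟨f.trans e⟩, fun ⟨f⟩ => ⟨f.trans e.symm⟩⟩

/-- Restriction of an isomorphism to induced subgraphs. -/
def isoInduceImage {G : SimpleGraph β} {G' : SimpleGraph γ} (φ : G ≃g G') (s : Set β) :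
    G.induce s ≃g G'.induce (φ '' s) where
  toEquiv := φ.toEquiv.image s
  map_rel_iff' := @fun a b => by
    simp only [Equiv.image, Equiv.coe_fn_mk, comap_adj, Function.Embedding.coe_subtype]
    exact φ.map_adj_iff

def isoInduceCongr (G : SimpleGraph β) {s t : Set β} (h : s = t) :
    G.induce s ≃g G.induce t := by subst h; exact Iso.refl

def induceInduce (G : SimpleGraph β) (t : Set β) (s : Set t) :
    (G.induce t).induce s ≃g G.induce (Subtype.val '' s) where
  toEquiv := Equiv.Set.image _ s Subtype.val_injective
  map_rel_iff' := @fun a b => by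
    simp [Equiv.Set.image, Equiv.Set.imageOfInjOn, comap_adj]


section Transfer

variable {β γ : Type*} [Fintype γ] {G : SimpleGraph β} {F : SimpleGraph γ} {U : Finset β}

/-- Forward image of a finset under an isomorphism `G[U] ≅ F`. -/
def fImg (φ : G.induce (U : Set β) ≃g F) (S : Finset β) : Finset γ :=
  univ.filter fun y => ((φ.symm y : (U : Set β)) : β) ∈ S

/-- Backward image. -/
def bImg (φ : G.induce (U : Set β) ≃g F) (S' : Finset γ) : Finset β :=
  U.filter fun x => ∃ h : x ∈ U, φ ⟨x, h⟩ ∈ S'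

lemma mem_fImg (φ : G.induce (U : Set β) ≃g F) (S : Finset β) (y : γ) :
    y ∈ fImg φ S ↔ ((φ.symm y : (U : Set β)) : β) ∈ S := by simp [fImg]

lemma mem_bImg (φ : G.induce (U : Set β) ≃g F) (S' : Finset γ) (x : β) :
    x ∈ bImg φ S' ↔ ∃ h : x ∈ U, φ ⟨x, h⟩ ∈ S' := by
  simp only [bImg, mem_filter, and_iff_right_iff_imp]
  rintro ⟨h, -⟩; exact h

lemma coe_fImg (φ : G.induce (U : Set β) ≃g F) (S : Finset β) :
    (fImg φ S : Set γ) = φ '' (Subtype.val ⁻¹' (S : Set β)) := by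
  ext y
  simp only [mem_coe, mem_fImg, Set.mem_image, Set.mem_preimage]
  constructor
  · intro h; exact ⟨φ.symm y, h, by simp⟩
  · rintro ⟨x, hx, rfl⟩; simpa using hx

lemma bImg_subset (φ : G.induce (U : Set β) ≃g F) (S' : Finset γ) : bImg φ S' ⊆ U :=
  filter_subset _ _

lemma fImg_bImg (φ : G.induce (U : Set β) ≃g F) (S' : Finset γ) :
    fImg φ (bImg φ S') = S' := by
  ext y
  rw [mem_fImg, mem_bImg]
  constructor
  · rintro ⟨h, hy⟩
    rwa [Subtype.coe_eta, RelIso.apply_symm_apply] at hy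
  · intro hy
    exact ⟨(φ.symm y).2, by rwa [Subtype.coe_eta, RelIso.apply_symm_apply]⟩

lemma bImg_fImg (φ : G.induce (U : Set β) ≃g F) {S : Finset β} (hS : S ⊆ U) :
    bImg φ (fImg φ S) = S := by
  ext x
  rw [mem_bImg]
  constructor
  · rintro ⟨h, hx⟩
    rw [mem_fImg] at hx
    rwa [RelIso.symm_apply_apply] at hx
  · intro hx
    refine ⟨hS hx, ?_⟩
    rw [mem_fImg, RelIso.symm_apply_apply]
    exact hx

lemma fImg_union (φ : G.induce (U : Set β) ≃g F) (S T : Finset β) :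
    fImg φ (S ∪ T) = fImg φ S ∪ fImg φ T := by
  ext y; simp [mem_fImg, mem_union]

lemma fImg_self (φ : G.induce (U : Set β) ≃g F) : fImg φ U = univ := by
  ext y; simp only [mem_fImg, mem_univ, iff_true]
  exact (φ.symm y).2

lemma bImg_union (φ : G.induce (U : Set β) ≃g F) (S' T' : Finset γ) :
    bImg φ (S' ∪ T') = bImg φ S' ∪ bImg φ T' := by
  ext x; simp only [mem_bImg, mem_union]
  constructor
  · rintro ⟨h, hy | hy⟩
    · exact Or.inl ⟨h, hy⟩
    · exact Or.inr ⟨h, hy⟩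
  · rintro (⟨h, hy⟩ | ⟨h, hy⟩)
    · exact ⟨h, Or.inl hy⟩
    · exact ⟨h, Or.inr hy⟩

lemma bImg_univ (φ : G.induce (U : Set β) ≃g F) : bImg φ univ = U := by
  ext x; simp only [mem_bImg, mem_univ]
  exact ⟨fun ⟨h, _⟩ => h, fun h => ⟨h, trivial⟩⟩

/-- Transport of isomorphism type of induced subgraph along `φ`. -/
lemma induce_fImg_iso (φ : G.induce (U : Set β) ≃g F) {S : Finset β} (hS : S ⊆ U) :
    Nonempty (G.induce (S : Set β) ≃g F.induce ((fImg φ S : Finset γ) : Set γ)) := by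
  have h1 : Subtype.val '' (Subtype.val ⁻¹' (S : Set β) : Set (U : Set β)) = (S : Set β) := by
    rw [Set.image_preimage_eq_inter_range, Subtype.range_coe]
    exact Set.inter_eq_left.mpr (by exact_mod_cast hS)
  exact ⟨(((isoInduceCongr G h1.symm).trans
      (induceInduce G (U : Set β) _).symm).trans
      (isoInduceImage φ _)).trans
      (isoInduceCongr F (coe_fImg φ S).symm)⟩

lemma induce_iso_iff {α' : Type*} (φ : G.induce (U : Set β) ≃g F) {S : Finset β} (hS : S ⊆ U)
    (A : SimpleGraph α') :
    Nonempty (G.induce (S : Set β) ≃g A) ↔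
      Nonempty (F.induce ((fImg φ S : Finset γ) : Set γ) ≃g A) := by
  obtain ⟨e⟩ := induce_fImg_iso φ hS
  exact ⟨fun ⟨f⟩ => ⟨e.symm.trans f⟩, fun ⟨f⟩ => ⟨e.trans f⟩⟩

end Transfer

section PCount

variable {α' α'' β γ : Type*} [Fintype β] [Fintype γ]

/-- Number of pairs `(S, T)` with `S ∪ T = U`, `G[S] ≅ A`, `G[T] ≅ B`. -/
def pcount (A : SimpleGraph α') (B : SimpleGraph α'') (G : SimpleGraph β) (U : Finset β) : ℕ :=
  Nat.card {ST : Finset β × Finset β //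
    (ST.1 : Set β) ∪ (ST.2 : Set β) = (U : Set β) ∧
      Nonempty (G.induce (ST.1 : Set β) ≃g A) ∧
      Nonempty (G.induce (ST.2 : Set β) ≃g B)}

lemma coe_union_eq_iff {β : Type*} {S T U : Finset β} :
    (S : Set β) ∪ (T : Set β) = (U : Set β) ↔ S ∪ T = U := by
  rw [← Finset.coe_union, Finset.coe_inj]

lemma pcount_pos {A : SimpleGraph α'} {B : SimpleGraph α''} {G : SimpleGraph β}
    {U S T : Finset β} (hU : (S : Set β) ∪ (T : Set β) = (U : Set β))
    (hA : Nonempty (G.induce (S : Set β) ≃g A)) (hB : Nonempty (G.induce (T : Set β) ≃g B)) :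
    0 < pcount A B G U := by
  rw [pcount]
  haveI : Nonempty {ST : Finset β × Finset β //
      (ST.1 : Set β) ∪ (ST.2 : Set β) = (U : Set β) ∧
        Nonempty (G.induce (ST.1 : Set β) ≃g A) ∧
        Nonempty (G.induce (ST.2 : Set β) ≃g B)} := ⟨⟨(S, T), hU, hA, hB⟩⟩
  exact Nat.card_pos

lemma pcount_transfer (A : SimpleGraph α') (B : SimpleGraph α'')
    {G : SimpleGraph β} {F : SimpleGraph γ} {U : Finset β}
    (φ : G.induce (U : Set β) ≃g F) :
    pcount A B G U = pcount A B F univ := by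
  refine Nat.card_congr ?_
  refine
    { toFun := fun x => ⟨(fImg φ x.1.1, fImg φ x.1.2), ?_, ?_, ?_⟩
      invFun := fun y => ⟨(bImg φ y.1.1, bImg φ y.1.2), ?_, ?_, ?_⟩
      left_inv := ?_
      right_inv := ?_ }
  · rw [coe_union_eq_iff, ← fImg_union, coe_union_eq_iff.mp x.2.1, fImg_self]
  · exact (induce_iso_iff φ
      (subset_union_left.trans (coe_union_eq_iff.mp x.2.1).le) A).mp x.2.2.1
  · exact (induce_iso_iff φ
      (subset_union_right.trans (coe_union_eq_iff.mp x.2.1).le) B).mp x.2.2.2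
  · rw [coe_union_eq_iff, ← bImg_union, coe_union_eq_iff.mp y.2.1, bImg_univ]
  · have := (induce_iso_iff φ (bImg_subset φ y.1.1) A).mpr
    rw [fImg_bImg] at this
    exact this y.2.2.1
  · have := (induce_iso_iff φ (bImg_subset φ y.1.2) B).mpr
    rw [fImg_bImg] at this
    exact this y.2.2.2
  · rintro ⟨⟨S, T⟩, hU, hA, hB⟩
    apply Subtype.ext
    simp only
    rw [bImg_fImg φ (by rw [← coe_union_eq_iff.mp hU]; exact subset_union_left),
      bImg_fImg φ (by rw [← coe_union_eq_iff.mp hU]; exact subset_union_right)]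
  · rintro ⟨⟨S', T'⟩, hU, hA, hB⟩
    apply Subtype.ext
    simp only
    rw [fImg_bImg, fImg_bImg]

end PCount

section Product

variable {α' α'' β : Type*} [Fintype β]

lemma graphCount_eq_card_filter {α : Type*} (H : SimpleGraph α) (G : SimpleGraph β) :
    graphCount H G = #(univ.filter fun S : Finset β => Nonempty (G.induce (S : Set β) ≃g H)) := by
  rw [graphCount, Nat.card_eq_fintype_card, Fintype.card_subtype]

lemma graphCount_mul (A : SimpleGraph α') (B : SimpleGraph α'') (G : SimpleGraph β) :
    graphCount A G * graphCount B G = ∑ U : Finset β, pcount A B G U := by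
  rw [graphCount, graphCount, ← Nat.card_prod]
  rw [Nat.card_congr (Equiv.subtypeProdEquivProd
    (p := fun S : Finset β => Nonempty (G.induce (S : Set β) ≃g A))
    (q := fun T : Finset β => Nonempty (G.induce (T : Set β) ≃g B))).symm]
  rw [Nat.card_congr (Equiv.sigmaFiberEquiv
    (fun ST : {c : Finset β × Finset β // Nonempty (G.induce (c.1 : Set β) ≃g A) ∧
      Nonempty (G.induce (c.2 : Set β) ≃g B)} => ST.1.1 ∪ ST.1.2)).symm]
  rw [Nat.card_eq_fintype_card, Fintype.card_sigma]
  refine Finset.sum_congr rfl fun U _ => ?_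
  rw [← Nat.card_eq_fintype_card, pcount]
  refine Nat.card_congr ?_
  exact (Equiv.subtypeSubtypeEquivSubtypeInter
      (fun c : Finset β × Finset β => Nonempty (G.induce (c.1 : Set β) ≃g A) ∧
        Nonempty (G.induce (c.2 : Set β) ≃g B))
      (fun c => c.1 ∪ c.2 = U)).trans
    (Equiv.subtypeEquivRight fun c => by rw [coe_union_eq_iff]; tauto)

end Product

section Classes

variable {β : Type*} [Fintype β]

/-- Isomorphism setoid on graphs on `Fin n`. -/
def gSetoid (n : ℕ) : Setoid (SimpleGraph (Fin n)) :=
  ⟨fun F F' => Nonempty (F ≃g F'),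
    ⟨fun F => ⟨Iso.refl⟩, fun ⟨e⟩ => ⟨e.symm⟩, fun ⟨e⟩ ⟨f⟩ => ⟨e.trans f⟩⟩⟩

abbrev QG (n : ℕ) := Quotient (gSetoid n)

noncomputable instance (n : ℕ) : Fintype (QG n) := Quotient.fintype _

lemma out_mk_iso {n : ℕ} (F : SimpleGraph (Fin n)) :
    Nonempty ((⟦F⟧ : QG n).out ≃g F) := by
  have := Quotient.mk_out (s := gSetoid n) F
  exact this

lemma eq_of_out_iso {n : ℕ} (q q' : QG n) (h : Nonempty (q.out ≃g q'.out)) : q = q' := by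
  rw [← q.out_eq, ← q'.out_eq]; exact Quotient.sound h

lemma card_coe_set (S : Finset β) : Fintype.card ((S : Set β) : Type _) = S.card := by
  simpa using Fintype.card_coe S

lemma card_of_induce_iso {α' : Type*} [Fintype α'] {A : SimpleGraph α'} {G : SimpleGraph β}
    {S : Finset β} (h : Nonempty (G.induce (S : Set β) ≃g A)) :
    S.card = Fintype.card α' := by
  obtain ⟨e⟩ := h
  rw [← card_coe_set S]
  exact Fintype.card_congr e.toEquiv

/-- The induced subgraph on `U`, transported to `Fin U.card`. -/
noncomputable def indFin (G : SimpleGraph β) (U : Finset β) : SimpleGraph (Fin U.card) :=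
  (G.induce (U : Set β)).overFin (card_coe_set U)

noncomputable def clsOf (G : SimpleGraph β) (U : Finset β) : QG U.card := ⟦indFin G U⟧

lemma isoClsOf (G : SimpleGraph β) (U : Finset β) :
    Nonempty (G.induce (U : Set β) ≃g (clsOf G U).out) :=
  ⟨((G.induce (U : Set β)).overFinIso (card_coe_set U)).trans
    (out_mk_iso (indFin G U)).some.symm⟩

variable {a b : ℕ} (A : SimpleGraph (Fin a)) (B : SimpleGraph (Fin b))

lemma pcount_card_le {G : SimpleGraph β} {U : Finset β} (h : pcount A B G U ≠ 0) :
    U.card ≤ a + b := by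
  rw [pcount] at h
  obtain ⟨⟨⟨⟨S, T⟩, hU, hA, hB⟩⟩, -⟩ := Nat.card_ne_zero.mp h
  have hS : S.card = a := by simpa using card_of_induce_iso hA
  have hT : T.card = b := by simpa using card_of_induce_iso hB
  calc U.card = (S ∪ T).card := by rw [coe_union_eq_iff.mp hU]
    _ ≤ S.card + T.card := card_union_le _ _
    _ = a + b := by rw [hS, hT]

lemma card_eq_of_iso_out {u : ℕ} {G : SimpleGraph β} {U : Finset β} {q : QG u}
    (h : Nonempty (G.induce (U : Set β) ≃g q.out)) : U.card = u := by
  simpa using card_of_induce_iso h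

lemma clsOf_eq {G : SimpleGraph β} {U : Finset β} {q : QG U.card}
    (h : Nonempty (G.induce (U : Set β) ≃g q.out)) : clsOf G U = q := by
  apply eq_of_out_iso
  obtain ⟨e⟩ := h
  obtain ⟨f⟩ := isoClsOf G U
  exact ⟨f.symm.trans e⟩

lemma pcount_eq_sum (G : SimpleGraph β) (U : Finset β) :
    pcount A B G U =
      ∑ u ∈ range (a + b + 1), ∑ q : QG u,
        if Nonempty (G.induce (U : Set β) ≃g q.out) then pcount A B q.out univ else 0 := by
  by_cases hle : U.card ≤ a + b
  · rw [Finset.sum_eq_single_of_mem U.card (mem_range.mpr (by omega))]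
    · rw [Finset.sum_eq_single_of_mem (clsOf G U) (mem_univ _)]
      · rw [if_pos (isoClsOf G U)]
        exact pcount_transfer A B (isoClsOf G U).some
      · intro q _ hq
        rw [if_neg]
        intro hiso
        exact hq (clsOf_eq hiso).symm
    · intro u _ hne
      apply Finset.sum_eq_zero
      intro q _
      rw [if_neg]
      intro hiso
      exact hne (card_eq_of_iso_out hiso).symm
  · have h0 : pcount A B G U = 0 := by
      by_contra h
      exact hle (pcount_card_le A B h)
    rw [h0]
    symm
    apply Finset.sum_eq_zero
    intro u hu
    apply Finset.sum_eq_zero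
    intro q _
    rw [if_neg]
    intro hiso
    have := card_eq_of_iso_out hiso
    rw [mem_range] at hu
    omega

/-- The grand product decomposition identity. -/
lemma graphCount_mul_eq (G : SimpleGraph β) :
    graphCount A G * graphCount B G =
      ∑ u ∈ range (a + b + 1), ∑ q : QG u,
        pcount A B q.out univ * graphCount q.out G := by
  rw [graphCount_mul, Finset.sum_congr rfl fun U _ => pcount_eq_sum A B G U, Finset.sum_comm]
  refine Finset.sum_congr rfl fun u _ => ?_
  rw [Finset.sum_comm]
  refine Finset.sum_congr rfl fun q _ => ?_
  rw [graphCount_eq_card_filter, ← Finset.sum_filter, Finset.sum_const, smul_eq_mul, mul_comm]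

end Classes

section Edges

variable {γ δ : Type*} [Fintype γ] [Fintype δ]

def edgesIn (K : SimpleGraph γ) (S : Finset γ) : Finset (Sym2 γ) :=
  (K.induce (S : Set γ)).edgeFinset.image (Sym2.map Subtype.val)

lemma card_edgesIn (K : SimpleGraph γ) (S : Finset γ) :
    (edgesIn K S).card = (K.induce (S : Set γ)).edgeFinset.card :=
  card_image_of_injective _ (Sym2.map.injective Subtype.val_injective)

lemma map_mem_edgeSet {K : SimpleGraph γ} {s : Set γ} (e : Sym2 s)
    (he : e ∈ (K.induce s).edgeSet) : Sym2.map Subtype.val e ∈ K.edgeSet := by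
  induction e with
  | _ u v =>
    rw [SimpleGraph.mem_edgeSet] at he
    rw [Sym2.map_pair_eq, SimpleGraph.mem_edgeSet]
    exact he

lemma edgesIn_subset (K : SimpleGraph γ) (S : Finset γ) : edgesIn K S ⊆ K.edgeFinset := by
  intro z hz
  obtain ⟨e, he, rfl⟩ := mem_image.mp hz
  rw [SimpleGraph.mem_edgeFinset] at he ⊢
  exact map_mem_edgeSet e he

lemma mem_edgesIn_endpoint {K : SimpleGraph γ} {S : Finset γ} {z : Sym2 γ}
    (hz : z ∈ edgesIn K S) : ∀ v ∈ z, v ∈ S := by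
  obtain ⟨e, he, rfl⟩ := mem_image.mp hz
  intro v hv
  rw [Sym2.mem_map] at hv
  obtain ⟨w, _, rfl⟩ := hv
  exact w.2

lemma mem_edgesIn_of {K : SimpleGraph γ} {S : Finset γ} {x y : γ}
    (hadj : K.Adj x y) (hx : x ∈ S) (hy : y ∈ S) : s(x, y) ∈ edgesIn K S := by
  refine mem_image.mpr ⟨s(⟨x, hx⟩, ⟨y, hy⟩), ?_, by rw [Sym2.map_pair_eq]⟩
  rw [SimpleGraph.mem_edgeFinset, SimpleGraph.mem_edgeSet]
  exact hadj

lemma edgesIn_disjoint {K : SimpleGraph γ} {S T : Finset γ} (hd : Disjoint S T) :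
    Disjoint (edgesIn K S) (edgesIn K T) := by
  rw [Finset.disjoint_left]
  intro z h1 h2
  induction z with
  | _ x y =>
    have hx1 := mem_edgesIn_endpoint h1 x (Sym2.mem_mk_left x y)
    have hx2 := mem_edgesIn_endpoint h2 x (Sym2.mem_mk_left x y)
    exact (Finset.disjoint_left.mp hd hx1) hx2

lemma edgesIn_union_eq {K : SimpleGraph γ} {S T : Finset γ} (hST : ∀ x, x ∈ S ∨ x ∈ T)
    (hfree : ∀ x ∈ S, ∀ y ∈ T, ¬K.Adj x y) :
    edgesIn K S ∪ edgesIn K T = K.edgeFinset := by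
  apply subset_antisymm
  · exact union_subset (edgesIn_subset K S) (edgesIn_subset K T)
  · intro z hz
    induction z with
    | _ x y =>
      rw [SimpleGraph.mem_edgeFinset, SimpleGraph.mem_edgeSet] at hz
      rcases hST x with hx | hx <;> rcases hST y with hy | hy
      · exact mem_union_left _ (mem_edgesIn_of hz hx hy)
      · exact absurd hz (hfree x hx y hy)
      · exact absurd hz.symm (hfree y hy x hx)
      · exact mem_union_right _ (mem_edgesIn_of hz hx hy)

lemma card_edgeFinset_iso {K : SimpleGraph γ} {K' : SimpleGraph δ} (φ : K ≃g K') :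
    K.edgeFinset.card = K'.edgeFinset.card := by
  rw [SimpleGraph.edgeFinset_card, SimpleGraph.edgeFinset_card]
  exact Fintype.card_congr φ.mapEdgeSet

lemma edge_split_eq {K : SimpleGraph γ} {S T : Finset γ} (hST : ∀ x, x ∈ S ∨ x ∈ T)
    (hd : Disjoint S T) (hfree : ∀ x ∈ S, ∀ y ∈ T, ¬K.Adj x y) :
    K.edgeFinset.card =
      (K.induce (S : Set γ)).edgeFinset.card + (K.induce (T : Set γ)).edgeFinset.card := by
  rw [← edgesIn_union_eq hST hfree, card_union_of_disjoint (edgesIn_disjoint hd),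
    card_edgesIn, card_edgesIn]

lemma edge_split_lt {K : SimpleGraph γ} {S T : Finset γ} (hST : ∀ x, x ∈ S ∨ x ∈ T)
    (hd : Disjoint S T) {x y : γ} (hx : x ∈ S) (hy : y ∈ T) (hadj : K.Adj x y) :
    (K.induce (S : Set γ)).edgeFinset.card + (K.induce (T : Set γ)).edgeFinset.card
      < K.edgeFinset.card := by
  rw [← card_edgesIn K S, ← card_edgesIn K T,
    ← card_union_of_disjoint (edgesIn_disjoint hd)]
  apply card_lt_card
  constructor
  · exact union_subset (edgesIn_subset K S) (edgesIn_subset K T)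
  · intro hsub
    have hz : s(x, y) ∈ K.edgeFinset := by
      rw [SimpleGraph.mem_edgeFinset, SimpleGraph.mem_edgeSet]; exact hadj
    have := hsub hz
    rw [mem_union] at this
    rcases this with h | h
    · have := mem_edgesIn_endpoint h y (Sym2.mem_mk_right x y)
      exact (Finset.disjoint_left.mp hd this) hy
    · have := mem_edgesIn_endpoint h x (Sym2.mem_mk_left x y)
      exact (Finset.disjoint_left.mp hd hx) this

/-- Assembling an isomorphism from isomorphisms of complementary parts with no cross edges. -/
lemma iso_of_parts {K : SimpleGraph γ} {K' : SimpleGraph δ} {S T : Finset γ} {S' T' : Finset δ}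
    (hT : ∀ x, x ∈ T ↔ ¬x ∈ S) (hT' : ∀ y, y ∈ T' ↔ ¬y ∈ S')
    (e1 : K.induce ((S : Finset γ) : Set γ) ≃g K'.induce ((S' : Finset δ) : Set δ))
    (e2 : K.induce ((T : Finset γ) : Set γ) ≃g K'.induce ((T' : Finset δ) : Set δ))
    (hfree : ∀ x ∈ S, ∀ y ∈ T, ¬K.Adj x y)
    (hfree' : ∀ x ∈ S', ∀ y ∈ T', ¬K'.Adj x y) :
    Nonempty (K ≃g K') := by
  let eA : {x // x ∈ S} ≃ {y // y ∈ S'} := e1.toEquiv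
  let eB : {x // ¬x ∈ S} ≃ {y // ¬y ∈ S'} :=
    ((Equiv.subtypeEquivRight fun x => (hT x).symm).trans
      e2.toEquiv).trans (Equiv.subtypeEquivRight hT')
  have coeA : ∀ (x : {x // x ∈ S}), (eA x : δ) = (e1 x : δ) := fun x => rfl
  have coeB : ∀ (x : {x // ¬x ∈ S}),
      (eB x : δ) = (e2 ⟨(x : γ), (hT _).mpr x.2⟩ : δ) := fun x => by
    simp [eB, Equiv.subtypeEquivRight, Equiv.subtypeEquiv]
  let E : γ ≃ δ := ((Equiv.sumCompl (· ∈ S)).symm.trans (Equiv.sumCongr eA eB)).trans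
    (Equiv.sumCompl (· ∈ S'))
  have hEpos : ∀ (u : γ) (h : u ∈ S), E u = (eA ⟨u, h⟩ : δ) := fun u h => by
    simp [E, Equiv.sumCompl_symm_apply_of_pos h]
  have hEneg : ∀ (u : γ) (h : ¬u ∈ S), E u = (eB ⟨u, h⟩ : δ) := fun u h => by
    simp [E, Equiv.sumCompl_symm_apply_of_neg h]
  have hEposmem : ∀ (u : γ) (h : u ∈ S), E u ∈ S' := fun u h => by
    rw [hEpos u h]; exact (eA ⟨u, h⟩).2
  have hEnegmem : ∀ (u : γ) (h : ¬u ∈ S), ¬E u ∈ S' := fun u h => by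
    rw [hEneg u h]; exact (eB ⟨u, h⟩).2
  refine ⟨⟨E, ?_⟩⟩
  intro u v
  by_cases hu : u ∈ S <;> by_cases hv : v ∈ S
  · rw [show E u = (e1 ⟨u, hu⟩ : δ) from hEpos u hu, show E v = (e1 ⟨v, hv⟩ : δ) from hEpos v hv]
    exact e1.map_adj_iff
  · refine iff_of_false ?_ ?_
    · exact hfree' (E u) (hEposmem u hu) (E v) ((hT' _).mpr (hEnegmem v hv))
    · exact hfree u hu v ((hT _).mpr hv)
  · refine iff_of_false ?_ ?_
    · intro h
      exact hfree' (E v) (hEposmem v hv) (E u) ((hT' _).mpr (hEnegmem u hu)) h.symm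
    · intro h
      exact hfree v hv u ((hT _).mpr hu) h.symm
  · rw [show E u = (e2 ⟨u, (hT _).mpr hu⟩ : δ) from (hEneg u hu).trans (coeB _),
      show E v = (e2 ⟨v, (hT _).mpr hv⟩ : δ) from (hEneg v hv).trans (coeB _)]
    exact e2.map_adj_iff

end Edges

section Main

lemma graphCount_zero {β : Type*} [Fintype β] (H : SimpleGraph (Fin 0)) (G : SimpleGraph β) :
    graphCount H G = 1 := by
  rw [graphCount]
  have hiff : ∀ S : Finset β, Nonempty (G.induce (S : Set β) ≃g H) ↔ S = ∅ := by
    intro S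
    constructor
    · rintro ⟨e⟩
      haveI : IsEmpty ((S : Set β) : Type _) := e.toEquiv.isEmpty
      have := Set.isEmpty_coe_sort.mp this
      exact_mod_cast this
    · rintro rfl
      haveI : IsEmpty (((∅ : Finset β) : Set β) : Type _) := by
        rw [Set.isEmpty_coe_sort]; exact_mod_cast rfl
      exact ⟨{ toEquiv := Equiv.equivOfIsEmpty _ _, map_rel_iff' := fun {a} => isEmptyElim a }⟩
  rw [Nat.card_congr (Equiv.subtypeEquivRight hiff)]
  haveI : Unique {S : Finset β // S = ∅} := ⟨⟨⟨∅, rfl⟩⟩, fun x => Subtype.ext x.2⟩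
  exact Nat.card_unique

/-- Index type: isomorphism classes of connected graphs on at most `N` vertices. -/
def cIdx (N : ℕ) := Σ k : Fin (N + 1), {q : QG k // (Quotient.out q).Connected}

noncomputable instance (N : ℕ) : Fintype (cIdx N) := by
  unfold cIdx; infer_instance

lemma cIdx_inj {N : ℕ} (x y : cIdx N) (h : Nonempty (x.2.1.out ≃g y.2.1.out)) : x = y := by
  obtain ⟨⟨k1, hk1⟩, q1, hq1⟩ := x
  obtain ⟨⟨k2, hk2⟩, q2, hq2⟩ := y
  obtain ⟨e⟩ := h
  have hk : k1 = k2 := by simpa using Fintype.card_congr e.toEquiv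
  subst hk
  have hq : q1 = q2 := eq_of_out_iso _ _ ⟨e⟩
  subst hq
  rfl

lemma main_induction (N : ℕ) :
    ∀ (m k : ℕ), k ≤ N → ∀ (H : SimpleGraph (Fin k)),
      k * (N.choose 2 + 1) + (k.choose 2 - H.edgeFinset.card) ≤ m →
      ∃ p : MvPolynomial (cIdx N) ℚ,
        ∀ (β : Type) [Fintype β] (G : SimpleGraph β),
          (graphCount H G : ℚ) =
            MvPolynomial.eval (fun i => (graphCount i.2.1.out G : ℚ)) p := by
  intro m
  induction m using Nat.strong_induction_on with
  | _ m ih =>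
  intro k hk H hm
  by_cases hk0 : k = 0
  · subst hk0
    exact ⟨1, fun β _ G => by rw [graphCount_zero, map_one]; norm_num⟩
  by_cases hconn : H.Connected
  · -- connected case: a single variable
    refine ⟨MvPolynomial.X ⟨⟨k, by omega⟩, ⟨(⟦H⟧ : QG k),
      (Iso.connected_iff (out_mk_iso H).some).mpr hconn⟩⟩, ?_⟩
    intro β _ G
    erw [MvPolynomial.eval_X]
    norm_cast
    exact graphCount_congr_left (out_mk_iso H).some.symm G
  · -- disconnected case
    have hpos : 0 < k := Nat.pos_of_ne_zero hk0
    have hnonempty : Nonempty (Fin k) := ⟨⟨0, hpos⟩⟩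
    rw [connected_iff] at hconn
    have hpre : ¬H.Preconnected := fun hP => hconn ⟨hP, hnonempty⟩
    obtain ⟨v, w, hvw⟩ : ∃ v w, ¬H.Reachable v w := by
      by_contra h
      push_neg at h
      exact hpre fun u v => h u v
    set S : Finset (Fin k) := univ.filter fun x => H.Reachable v x with hSdef
    have hvS : v ∈ S := by
      rw [hSdef, mem_filter]
      exact ⟨mem_univ v, SimpleGraph.Reachable.refl v⟩
    have hwS : w ∈ Sᶜ := by
      rw [mem_compl, hSdef, mem_filter]
      intro hc
      exact hvw hc.2
    have hScompl : ∀ x, x ∈ Sᶜ ↔ ¬x ∈ S := fun x => Finset.mem_compl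
    have hcover : ∀ x : Fin k, x ∈ S ∨ x ∈ Sᶜ := fun x => by
      by_cases h : x ∈ S
      · exact Or.inl h
      · exact Or.inr ((hScompl x).mpr h)
    have hfree : ∀ x ∈ S, ∀ y ∈ Sᶜ, ¬H.Adj x y := by
      intro x hx y hy hadj
      rw [hSdef, mem_filter] at hx
      rw [mem_compl, hSdef, mem_filter] at hy
      exact hy ⟨mem_univ y, hx.2.trans hadj.reachable⟩
    have hab : S.card + Sᶜ.card = k := by
      simpa using card_add_card_compl S
    have ha : 0 < S.card := card_pos.mpr ⟨v, hvS⟩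
    have hb : 0 < Sᶜ.card := card_pos.mpr ⟨w, hwS⟩
    set A : SimpleGraph (Fin S.card) := indFin H S with hAdef
    set B : SimpleGraph (Fin Sᶜ.card) := indFin H Sᶜ with hBdef
    have hA : Nonempty (H.induce (S : Set (Fin k)) ≃g A) :=
      ⟨(H.induce (S : Set (Fin k))).overFinIso (card_coe_set S)⟩
    have hB : Nonempty (H.induce ((Sᶜ : Finset (Fin k)) : Set (Fin k)) ≃g B) :=
      ⟨(H.induce ((Sᶜ : Finset (Fin k)) : Set (Fin k))).overFinIso (card_coe_set Sᶜ)⟩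
    have heH : H.edgeFinset.card = A.edgeFinset.card + B.edgeFinset.card := by
      rw [edge_split_eq hcover disjoint_compl_right hfree]
      exact congrArg₂ (· + ·) (by convert card_edgeFinset_iso hA.some)
        (by convert card_edgeFinset_iso hB.some)
    have hmono : ∀ k' : ℕ, k' ≤ N → k'.choose 2 ≤ N.choose 2 :=
      fun k' h => Nat.choose_le_choose 2 h
    have measure_lt : ∀ (k' e' : ℕ), k' < k → k' ≤ N →
        k' * (N.choose 2 + 1) + (k'.choose 2 - e') <
          k * (N.choose 2 + 1) + (k.choose 2 - H.edgeFinset.card) := by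
      intro k' e' h1 h2
      have h3 : k'.choose 2 - e' ≤ N.choose 2 := le_trans (Nat.sub_le _ _) (hmono k' h2)
      have h4 : (k' + 1) * (N.choose 2 + 1) ≤ k * (N.choose 2 + 1) :=
        Nat.mul_le_mul_right _ h1
      calc k' * (N.choose 2 + 1) + (k'.choose 2 - e') <
          k' * (N.choose 2 + 1) + (N.choose 2 + 1) := by omega
        _ = (k' + 1) * (N.choose 2 + 1) := by ring
        _ ≤ k * (N.choose 2 + 1) := h4
        _ ≤ _ := Nat.le_add_right _ _
    have subIH : ∀ (k' : ℕ), k' ≤ N → ∀ (H' : SimpleGraph (Fin k')),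
        (k' * (N.choose 2 + 1) + (k'.choose 2 - H'.edgeFinset.card) <
          k * (N.choose 2 + 1) + (k.choose 2 - H.edgeFinset.card)) →
        ∃ p : MvPolynomial (cIdx N) ℚ,
          ∀ (β : Type) [Fintype β] (G : SimpleGraph β),
            (graphCount H' G : ℚ) =
              MvPolynomial.eval (fun i => (graphCount i.2.1.out G : ℚ)) p :=
      fun k' hk' H' hlt => ih _ (lt_of_lt_of_le hlt hm) k' hk' H' le_rfl
    obtain ⟨pA, hpA⟩ := subIH S.card (by omega) A (measure_lt _ _ (by omega) (by omega))
    obtain ⟨pB, hpB⟩ := subIH Sᶜ.card (by omega) B (measure_lt _ _ (by omega) (by omega))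
    -- positivity of the leading coefficient
    have hq0iso : Nonempty (H.induce ((univ : Finset (Fin k)) : Set (Fin k)) ≃g
        ((⟦H⟧ : QG k)).out) := by
      refine ⟨(isoInduceCongr H (Finset.coe_univ)).trans ?_⟩
      exact H.induceUnivIso.trans (out_mk_iso H).some.symm
    have hc0 : 0 < pcount A B ((⟦H⟧ : QG k)).out univ := by
      rw [← pcount_transfer A B hq0iso.some]
      refine pcount_pos (S := S) (T := Sᶜ) ?_ hA hB
      ext x
      simp only [Set.mem_union, mem_coe, Finset.coe_univ, Set.mem_univ, iff_true]
      exact hcover x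
    -- edge dominance for other classes with nonzero coefficient
    have hedge : ∀ q : QG k, q ≠ (⟦H⟧ : QG k) → pcount A B q.out univ ≠ 0 →
        H.edgeFinset.card < (q.out).edgeFinset.card := by
      intro q hq hpc
      rw [pcount] at hpc
      obtain ⟨⟨⟨⟨S', T'⟩, hU, hA', hB'⟩⟩, -⟩ := Nat.card_ne_zero.mp hpc
      have hS' : S'.card = S.card := by simpa using card_of_induce_iso hA'
      have hT' : T'.card = Sᶜ.card := by simpa using card_of_induce_iso hB'
      have hcov : ∀ x : Fin k, x ∈ S' ∨ x ∈ T' := by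
        intro x
        have hx : (x : Fin k) ∈ ((S' : Set (Fin k)) ∪ (T' : Set (Fin k))) := by
          rw [hU]; simp
        simpa using hx
      have hUf : S' ∪ T' = univ := by
        ext x
        simp only [mem_union, mem_univ, iff_true]
        exact hcov x
      have hcardU : (S' ∪ T').card = k := by rw [hUf, card_univ, Fintype.card_fin]
      have hdisj : Disjoint S' T' := by
        have h1 := card_union_add_card_inter S' T'
        rw [hcardU, hS', hT', hab] at h1
        rw [disjoint_iff_inter_eq_empty, ← card_eq_zero]
        omega
      have hT'c : ∀ x, x ∈ T' ↔ ¬x ∈ S' := by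
        intro x
        constructor
        · intro hx hxS
          exact (Finset.disjoint_left.mp hdisj hxS) hx
        · intro hx
          rcases hcov x with h | h
          · exact absurd h hx
          · exact h
      by_cases hcross : ∃ x ∈ S', ∃ y ∈ T', (q.out).Adj x y
      · obtain ⟨x, hx, y, hy, hadj⟩ := hcross
        have hlt := edge_split_lt hcov hdisj hx hy hadj
        have hA2 : ((q.out).induce (S' : Set (Fin k))).edgeFinset.card = A.edgeFinset.card := by
          convert card_edgeFinset_iso hA'.some
        have hB2 : ((q.out).induce (T' : Set (Fin k))).edgeFinset.card = B.edgeFinset.card := by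
          convert card_edgeFinset_iso hB'.some
        rw [hA2, hB2] at hlt
        omega
      · push_neg at hcross
        exfalso
        have e1 : (q.out).induce (S' : Set (Fin k)) ≃g H.induce (S : Set (Fin k)) :=
          hA'.some.trans hA.some.symm
        have e2 : (q.out).induce ((T' : Finset (Fin k)) : Set (Fin k)) ≃g
            H.induce ((Sᶜ : Finset (Fin k)) : Set (Fin k)) :=
          hB'.some.trans hB.some.symm
        obtain ⟨eiso⟩ := iso_of_parts hT'c hScompl e1 e2 hcross hfree
        exact hq (eq_of_out_iso q (⟦H⟧ : QG k) ⟨eiso.trans (out_mk_iso H).some.symm⟩)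
    -- polynomials for lower terms
    have low : ∀ u : ℕ, u < k → ∀ q : QG u,
        ∃ p : MvPolynomial (cIdx N) ℚ,
          ∀ (β : Type) [Fintype β] (G : SimpleGraph β),
            (graphCount q.out G : ℚ) =
              MvPolynomial.eval (fun i => (graphCount i.2.1.out G : ℚ)) p :=
      fun u hu q => subIH u (by omega) q.out (measure_lt _ _ hu (by omega))
    have high : ∀ q : QG k, q ≠ (⟦H⟧ : QG k) →
        ∃ p : MvPolynomial (cIdx N) ℚ,
          ∀ (β : Type) [Fintype β] (G : SimpleGraph β),
            ((pcount A B q.out univ : ℚ) * graphCount q.out G) =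
              MvPolynomial.eval (fun i => (graphCount i.2.1.out G : ℚ)) p := by
      intro q hq
      by_cases h0 : pcount A B q.out univ = 0
      · exact ⟨0, fun β _ G => by simp [h0]⟩
      · have hlt : k * (N.choose 2 + 1) + (k.choose 2 - (q.out).edgeFinset.card) <
            k * (N.choose 2 + 1) + (k.choose 2 - H.edgeFinset.card) := by
          have h1 := hedge q hq h0
          have h2 : (q.out).edgeFinset.card ≤ k.choose 2 := by
            have := (q.out).card_edgeFinset_le_card_choose_two
            rwa [Fintype.card_fin] at this
          omega
        obtain ⟨p, hp⟩ := subIH k hk q.out hlt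
        refine ⟨MvPolynomial.C ((pcount A B q.out univ : ℚ)) * p, fun β _ G => ?_⟩
        rw [MvPolynomial.eval_mul, MvPolynomial.eval_C, ← hp β G]
    -- assemble the polynomial
    let plow : ∀ u : ℕ, QG u → MvPolynomial (cIdx N) ℚ :=
      fun u q => if h : u < k then
        MvPolynomial.C ((pcount A B q.out univ : ℚ)) * (low u h q).choose else 0
    let phigh : QG k → MvPolynomial (cIdx N) ℚ :=
      fun q => if h : q = (⟦H⟧ : QG k) then 0 else (high q h).choose
    refine ⟨MvPolynomial.C ((pcount A B ((⟦H⟧ : QG k)).out univ : ℚ))⁻¹ *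
      (pA * pB - (∑ u ∈ range k, ∑ q : QG u, plow u q) -
        ∑ q ∈ (univ : Finset (QG k)).erase (⟦H⟧ : QG k), phigh q), ?_⟩
    intro β _ G
    set pt := fun i : cIdx N => (graphCount i.2.1.out G : ℚ) with hpt
    -- the counting identity, cast to ℚ
    have h1 : (graphCount A G : ℚ) * graphCount B G =
        ∑ u ∈ range (k + 1), ∑ q : QG u,
          (pcount A B q.out univ : ℚ) * graphCount q.out G := by
      have h := graphCount_mul_eq A B G
      rw [hab] at h
      exact_mod_cast h
    rw [Finset.sum_range_succ] at h1
    rw [← Finset.add_sum_erase (univ : Finset (QG k))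
      (fun q => (pcount A B q.out univ : ℚ) * graphCount q.out G) (mem_univ (⟦H⟧ : QG k))] at h1
    have hgcH : (graphCount ((⟦H⟧ : QG k)).out G : ℚ) = graphCount H G := by
      norm_cast
      exact graphCount_congr_left (out_mk_iso H).some G
    rw [hgcH] at h1
    -- evaluate the polynomial
    have elow : ∀ u ∈ range k, ∀ q : QG u,
        MvPolynomial.eval pt (plow u q) =
          (pcount A B q.out univ : ℚ) * graphCount q.out G := by
      intro u hu q
      rw [mem_range] at hu
      simp only [plow, dif_pos hu]
      rw [MvPolynomial.eval_mul, MvPolynomial.eval_C, ← (low u hu q).choose_spec β G]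
    have ehigh : ∀ q ∈ (univ : Finset (QG k)).erase (⟦H⟧ : QG k),
        MvPolynomial.eval pt (phigh q) =
          (pcount A B q.out univ : ℚ) * graphCount q.out G := by
      intro q hq
      have hne := Finset.ne_of_mem_erase hq
      simp only [phigh, dif_neg hne]
      rw [← (high q hne).choose_spec β G]
    have hc0' : ((pcount A B ((⟦H⟧ : QG k)).out univ : ℕ) : ℚ) ≠ 0 := by
      exact_mod_cast hc0.ne'
    rw [MvPolynomial.eval_mul, MvPolynomial.eval_C, MvPolynomial.eval_sub,
      MvPolynomial.eval_sub, MvPolynomial.eval_mul, map_sum, map_sum]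
    rw [Finset.sum_congr rfl fun q hq => ehigh q hq]
    rw [Finset.sum_congr rfl fun u hu =>
      (map_sum (MvPolynomial.eval pt) _ _).trans (Finset.sum_congr rfl fun q _ => elow u hu q)]
    rw [← hpA β G, ← hpB β G, h1]
    field_simp
    ring

end Main

end

end IndCount

/-- For every finite simple graph `H` there exist pairwise non-isomorphic connected finite
simple graphs `H₁, …, Hₘ` and a polynomial `p ∈ ℚ[x₁, …, xₘ]` such that for every finite
simple graph `G` one has `i(H, G) = p(i(H₁, G), …, i(Hₘ, G))`. -/
theorem graphCount_mem_algebra_of_connected_counts {α : Type} [Fintype α]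
    (H : SimpleGraph α) :
    ∃ (m : ℕ) (n : Fin m → ℕ) (Hs : (i : Fin m) → SimpleGraph (Fin (n i)))
      (p : MvPolynomial (Fin m) ℚ),
      (∀ i, (Hs i).Connected) ∧
      (∀ i j, i ≠ j → IsEmpty (Hs i ≃g Hs j)) ∧
      (∀ (β : Type) [Fintype β] (G : SimpleGraph β),
        (graphCount H G : ℚ) =
          MvPolynomial.eval (fun i => (graphCount (Hs i) G : ℚ)) p) := by
  classical
  set N := Fintype.card α with hN
  obtain ⟨p, hp⟩ := IndCount.main_induction N
    (N * (N.choose 2 + 1) + (N.choose 2 - (H.overFin hN.symm).edgeFinset.card))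
    N le_rfl (H.overFin hN.symm) le_rfl
  let eI : IndCount.cIdx N ≃ Fin (Fintype.card (IndCount.cIdx N)) := Fintype.equivFin _
  refine ⟨Fintype.card (IndCount.cIdx N), fun i => ((eI.symm i).1 : ℕ),
    fun i => (eI.symm i).2.1.out, MvPolynomial.rename eI p, ?_, ?_, ?_⟩
  · exact fun i => (eI.symm i).2.2
  · intro i j hij
    refine ⟨fun e => hij ?_⟩
    have := IndCount.cIdx_inj (eI.symm i) (eI.symm j) ⟨e⟩
    exact eI.symm.injective this
  · intro β _ G
    rw [MvPolynomial.eval_rename]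
    have hfun : ((fun i => (graphCount ((eI.symm i).2.1.out) G : ℚ)) ∘ eI) =
        fun i : IndCount.cIdx N => (graphCount i.2.1.out G : ℚ) := by
      funext i
      have h2 : eI.symm (eI i) = i := eI.symm_apply_apply i
      exact congrArg (fun x : IndCount.cIdx N =>
        ((graphCount (Quotient.out x.snd.val) G : ℕ) : ℚ)) h2
    rw [hfun, ← hp β G]
    exact_mod_cast IndCount.graphCount_congr_left (H.overFinIso hN.symm) G
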